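/- Let A ⊆ ℝⁿ×(0,∞) be a union of top half-cubes T(Q) = Q × [l(Q)/2, l(Q)] over some family of dyadic cubes Q of side length ≤ 1. Then A satisfies the hyperbolic plumpness condition: there exist δ, δ' ∈ (0,1/10) (depending only on n) such that for every z ∈ A, |B_ρ(z,δ) ∩ A| ≥ δ'|B_ρ(z,δ)|. -/

import Mathlib

open MeasureTheory

/-- The hyperbolic distance on the upper half-space `ℝⁿ × (0,∞)`. -/
noncomputable def hypDist {n : ℕ} (z w : EuclideanSpace ℝ (Fin n) × ℝ) : ℝ :=
  2 * Real.arsinh (Real.sqrt (dist z.1 w.1 ^ 2 + (z.2 - w.2) ^ 2) /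
    (2 * Real.sqrt (z.2 * w.2)))

/-- The hyperbolic ball of centre `z` and radius `r` in the upper half-space. -/
def hypBall {n : ℕ} (z : EuclideanSpace ℝ (Fin n) × ℝ) (r : ℝ) :
    Set (EuclideanSpace ℝ (Fin n) × ℝ) :=
  {w | 0 < w.2 ∧ hypDist z w < r}

/-- The dyadic cube `{x : 2^j x − k ∈ [0,1]^n}` of generation `j ≥ 0`. -/
def dyadicCube (n : ℕ) (j : ℕ) (k : Fin n → ℤ) : Set (EuclideanSpace ℝ (Fin n)) :=
  {x | ∀ i, (k i : ℝ) ≤ 2 ^ j * x i ∧ 2 ^ j * x i ≤ k i + 1}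

/-- The top half-cube `T(Q) = Q × [l(Q)/2, l(Q)]` of a dyadic cube of generation `j`. -/
def topHalf (n : ℕ) (j : ℕ) (k : Fin n → ℤ) : Set (EuclideanSpace ℝ (Fin n) × ℝ) :=
  dyadicCube n j k ×ˢ Set.Icc ((2 : ℝ) ^ (-(j : ℝ)) / 2) ((2 : ℝ) ^ (-(j : ℝ)))

/-- Volume of an axis-parallel box in `EuclideanSpace ℝ (Fin n)`. -/
lemma volume_box {n : ℕ} (a b : Fin n → ℝ) :
    volume {x : EuclideanSpace ℝ (Fin n) | ∀ i, x i ∈ Set.Icc (a i) (b i)} =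
      ∏ i, ENNReal.ofReal (b i - a i) := by
  have h := (EuclideanSpace.volume_preserving_symm_measurableEquiv_toLp (Fin n))
  have : {x : EuclideanSpace ℝ (Fin n) | ∀ i, x i ∈ Set.Icc (a i) (b i)} =
      (MeasurableEquiv.toLp 2 (Fin n → ℝ)).symm ⁻¹' (Set.univ.pi fun i => Set.Icc (a i) (b i)) := by
    ext x
    simp only [Set.mem_setOf_eq, Set.mem_preimage, Set.mem_univ_pi]
    rfl
  rw [this, h.measure_preimage (MeasurableSet.univ_pi fun i => measurableSet_Icc).nullMeasurableSet,
    volume_pi_pi]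
  simp [Real.volume_Icc]

/-- `sinh (1/40) < 1/30`. -/
lemma sinh_forty_lt : Real.sinh (1/40) < 1/30 := by
  have h1 : Real.exp (1/40) < 40/39 := by
    have h2 : Real.exp (-(1/40 : ℝ)) > 1 - 1/40 := by
      have := Real.add_one_lt_exp (x := -(1/40 : ℝ)) (by norm_num)
      linarith
    have h3 : (0:ℝ) < 1 - 1/40 := by norm_num
    have h4 : Real.exp (1/40) * Real.exp (-(1/40:ℝ)) = 1 := by
      rw [← Real.exp_add]; norm_num
    nlinarith [Real.exp_pos (1/40 : ℝ)]
  have h2 : Real.exp (-(1/40 : ℝ)) > 39/40 := by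
    have := Real.add_one_lt_exp (x := -(1/40 : ℝ)) (by norm_num)
    linarith
  rw [Real.sinh_eq]
  linarith

set_option maxHeartbeats 1600000 in
/-- Any union of top half-cubes of dyadic cubes of side length at most 1
satisfies the hyperbolic plumpness condition, with constants `δ, δ' ∈ (0, 1/10)` depending
only on `n`. -/
theorem plumpness_of_union_topHalves (n : ℕ) :
    ∃ δ δ' : ℝ, δ ∈ Set.Ioo (0 : ℝ) (1 / 10) ∧ δ' ∈ Set.Ioo (0 : ℝ) (1 / 10) ∧
      ∀ F : Set (ℕ × (Fin n → ℤ)),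
        ∀ z ∈ ⋃ q ∈ F, topHalf n q.1 q.2,
          ENNReal.ofReal δ' * volume (hypBall z δ) ≤
            volume (hypBall z δ ∩ ⋃ q ∈ F, topHalf n q.1 q.2) := by
  set s : ℝ := Real.sinh (1/40) with hs_def
  have hs0 : 0 < s := Real.sinh_pos_iff.2 (by norm_num)
  have hs2 : s < 1/30 := sinh_forty_lt
  have hn1 : (1:ℝ) ≤ (n:ℝ) + 1 := by simp [Nat.cast_nonneg]
  set δ' : ℝ := (1/(32*((n:ℝ)+1)))^(n+1) with hδ'_def
  have hδ'0 : 0 < δ' := by positivity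
  have hδ'lt : δ' < 1/10 := by
    have h1 : (1:ℝ)/(32*((n:ℝ)+1)) ≤ 1/32 := by
      apply div_le_div_of_nonneg_left (by norm_num) (by norm_num)
      nlinarith
    have h2 : δ' ≤ (1/32 : ℝ)^(n+1) := by
      apply pow_le_pow_left₀ (by positivity) h1
    have h3 : ((1:ℝ)/32)^(n+1) ≤ (1/32 : ℝ)^1 := by
      apply pow_le_pow_of_le_one (by norm_num) (by norm_num)
      omega
    calc δ' ≤ (1/32:ℝ)^(n+1) := h2
      _ ≤ (1/32:ℝ)^1 := h3
      _ < 1/10 := by norm_num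
  refine ⟨1/20, δ', ⟨by norm_num, by norm_num⟩, ⟨hδ'0, hδ'lt⟩, ?_⟩
  intro F z hz
  simp only [Set.mem_iUnion] at hz
  obtain ⟨q, hqF, hzq⟩ := hz
  obtain ⟨j, k⟩ := q
  rw [topHalf, Set.mem_prod] at hzq
  obtain ⟨hz1, hz2⟩ := hzq
  -- basic facts about the cube containing z
  set ℓ : ℝ := (2:ℝ)^(-(j:ℝ)) with hℓ_def
  have hℓP : ℓ = ((2:ℝ)^j)⁻¹ := by
    rw [hℓ_def, ← Real.rpow_natCast 2 j, ← Real.rpow_neg (by norm_num)]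
  have hP0 : (0:ℝ) < 2^j := by positivity
  have hℓ0 : 0 < ℓ := by rw [hℓP]; positivity
  have hPl : (2:ℝ)^j * ℓ = 1 := by rw [hℓP]; field_simp
  have hz2a : ℓ/2 ≤ z.2 := hz2.1
  have hz2b : z.2 ≤ ℓ := hz2.2
  have hz20 : 0 < z.2 := lt_of_lt_of_le (half_pos hℓ0) hz2a
  have hx : ∀ i, (k i : ℝ) * ℓ ≤ z.1 i ∧ z.1 i ≤ ((k i:ℝ)+1) * ℓ := by
    intro i
    obtain ⟨h1, h2⟩ := hz1 i
    have e : (2:ℝ)^j * z.1 i * ℓ = z.1 i := by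
      rw [mul_comm ((2:ℝ)^j) (z.1 i), mul_assoc, hPl, mul_one]
    constructor
    · have := mul_le_mul_of_nonneg_right h1 hℓ0.le
      linarith [this.trans_eq e]
    · have := mul_le_mul_of_nonneg_right h2 hℓ0.le
      rw [e] at this
      linarith
  -- the small inner box
  set r : ℝ := s * ℓ / (4*((n:ℝ)+1)) with hr_def
  have hr0 : 0 < r := div_pos (mul_pos hs0 hℓ0) (by positivity)
  have hrn : ((n:ℝ)+1) * r = s * ℓ / 4 := by
    rw [hr_def]; field_simp
  have hrℓ2 : r ≤ ℓ/2 := by nlinarith [hrn, hr0, hs2, hℓ0, hs0, hn1]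
  have hrℓ : r ≤ ℓ := by linarith
  have hrz : ((n:ℝ)+1) * r ≤ s * z.2 / 2 := by nlinarith [hrn, hs0]
  set c : Fin n → ℝ := fun i => min (z.1 i) (((k i : ℝ)+1) * ℓ - r) with hc_def
  set c' : ℝ := min z.2 (ℓ - r) with hc'_def
  have hcz : ∀ i, c i ≤ z.1 i ∧ z.1 i ≤ c i + r := by
    intro i
    refine ⟨min_le_left _ _, ?_⟩
    have : z.1 i - r ≤ c i := le_min (by linarith) (by linarith [(hx i).2])
    linarith
  have hcQ : ∀ i, (k i : ℝ) * ℓ ≤ c i ∧ c i + r ≤ ((k i:ℝ)+1) * ℓ := by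
    intro i
    refine ⟨le_min (hx i).1 (by nlinarith [(hx i).1, hrℓ]), ?_⟩
    have := min_le_right (z.1 i) (((k i : ℝ)+1) * ℓ - r)
    linarith
  have hc'z : c' ≤ z.2 ∧ z.2 ≤ c' + r := by
    refine ⟨min_le_left _ _, ?_⟩
    have : z.2 - r ≤ c' := le_min (by linarith) (by linarith)
    linarith
  have hc'I : ℓ/2 ≤ c' ∧ c' + r ≤ ℓ := by
    refine ⟨le_min hz2a (by linarith), ?_⟩
    have := min_le_right z.2 (ℓ - r)
    linarith
  set S : Set (EuclideanSpace ℝ (Fin n) × ℝ) :=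
    ({x : EuclideanSpace ℝ (Fin n) | ∀ i, x i ∈ Set.Icc (c i) (c i + r)} ×ˢ
      Set.Icc c' (c' + r)) with hS_def
  -- the outer box
  set R : ℝ := 4 * s * z.2 with hR_def
  have hR0 : 0 < R := by rw [hR_def]; positivity
  set Box : Set (EuclideanSpace ℝ (Fin n) × ℝ) :=
    ({x : EuclideanSpace ℝ (Fin n) | ∀ i, x i ∈ Set.Icc (z.1 i - R) (z.1 i + R)} ×ˢ
      Set.Icc (z.2 - R) (z.2 + R)) with hBox_def
  -- rephrasing the hyperbolic distance condition
  have hiff : ∀ w : EuclideanSpace ℝ (Fin n) × ℝ, (hypDist z w < 1/20 ↔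
      Real.sqrt (dist z.1 w.1 ^ 2 + (z.2 - w.2) ^ 2) / (2 * Real.sqrt (z.2 * w.2)) < s) := by
    intro w
    rw [hypDist, show (1/20:ℝ) = 2 * Real.arsinh s by rw [hs_def, Real.arsinh_sinh]; norm_num,
      mul_lt_mul_iff_right₀ two_pos, Real.arsinh_lt_arsinh]
  have hdistsq : ∀ w : EuclideanSpace ℝ (Fin n), dist z.1 w ^ 2 = ∑ i, (z.1 i - w i)^2 := by
    intro w
    rw [EuclideanSpace.dist_eq, Real.sq_sqrt (Finset.sum_nonneg fun i _ => sq_nonneg _)]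
    simp [Real.dist_eq, sq_abs]
  -- the three set inclusions
  have hS_T : S ⊆ topHalf n j k := by
    intro w hw
    rw [hS_def] at hw
    obtain ⟨hw1, hw2⟩ := hw
    rw [topHalf, Set.mem_prod]
    constructor
    · intro i
      obtain ⟨ha, hb⟩ := hw1 i
      obtain ⟨hQ1, hQ2⟩ := hcQ i
      have h1 : (k i : ℝ) * ℓ ≤ w.1 i := le_trans hQ1 ha
      have h2 : w.1 i ≤ ((k i:ℝ)+1) * ℓ := le_trans hb hQ2
      have e : ∀ t : ℝ, t * ℓ * 2^j = t := by
        intro t; rw [mul_assoc, mul_comm ℓ, hPl, mul_one]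
      have e2 : (2:ℝ)^j * w.1 i = w.1 i * 2^j := mul_comm _ _
      constructor
      · have h3 := mul_le_mul_of_nonneg_right h1 hP0.le
        rw [e] at h3
        rw [e2]
        exact h3
      · have h3 := mul_le_mul_of_nonneg_right h2 hP0.le
        rw [e] at h3
        rw [e2]
        exact h3
    · rw [← hℓ_def]
      exact ⟨le_trans hc'I.1 hw2.1, le_trans hw2.2 hc'I.2⟩
  have hS_B : S ⊆ hypBall z (1/20) := by
    intro w hw
    rw [hS_def] at hw
    obtain ⟨hw1, hw2⟩ := hw
    have hw20 : (0:ℝ) < w.2 := lt_of_lt_of_le (half_pos hℓ0) (le_trans hc'I.1 hw2.1)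
    refine ⟨hw20, ?_⟩
    rw [hiff w]
    have hwhalf : z.2 / 2 ≤ w.2 := by linarith [hc'I.1, hw2.1, hz2b]
    have hden : z.2 / 2 ≤ Real.sqrt (z.2 * w.2) := by
      rw [show z.2/2 = Real.sqrt ((z.2/2)^2) from (Real.sqrt_sq (by positivity)).symm]
      apply Real.sqrt_le_sqrt
      nlinarith [hz20]
    have hD : dist z.1 w.1 ^ 2 + (z.2 - w.2)^2 ≤ ((n:ℝ)+1) * r^2 := by
      have h1 : dist z.1 w.1 ^2 ≤ (n:ℝ) * r^2 := by
        rw [hdistsq]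
        calc ∑ i, (z.1 i - w.1 i)^2 ≤ ∑ _i : Fin n, r^2 := by
              apply Finset.sum_le_sum
              intro i _
              obtain ⟨ha, hb⟩ := hw1 i
              obtain ⟨h2a, h2b⟩ := hcz i
              apply sq_le_sq'
              · linarith [hb, h2a]
              · linarith [ha, h2b]
          _ = (n:ℝ) * r^2 := by
              rw [Finset.sum_const, Finset.card_univ, Fintype.card_fin, nsmul_eq_mul]
      have h2 : (z.2 - w.2)^2 ≤ r^2 := by
        apply sq_le_sq'
        · linarith [hc'z.1, hw2.2]
        · linarith [hc'z.2, hw2.1]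
      have e : ((n:ℝ)+1)*r^2 = (n:ℝ)*r^2 + r^2 := by ring
      linarith [h1, h2, e]
    have hsz : 0 < s * z.2 := mul_pos hs0 hz20
    have hden0 : (0:ℝ) < 2 * Real.sqrt (z.2 * w.2) := by nlinarith [hden, hz20]
    rw [div_lt_iff₀ hden0]
    have h5 : (((n:ℝ)+1) * r)^2 ≤ (s*z.2/2)^2 := by
      have h := mul_self_le_mul_self (mul_nonneg (by positivity : (0:ℝ) ≤ (n:ℝ)+1) hr0.le) hrz
      nlinarith [h]
    have step : Real.sqrt (dist z.1 w.1 ^2 + (z.2 - w.2)^2) < s * z.2 := by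
      rw [Real.sqrt_lt' hsz]
      nlinarith [hD, h5, hn1, sq_nonneg r, hsz, mul_pos hsz hsz]
    calc Real.sqrt (dist z.1 w.1 ^2 + (z.2 - w.2)^2) < s * z.2 := step
      _ ≤ s * (2 * Real.sqrt (z.2 * w.2)) := by nlinarith [hden, hs0]
  have hB_Box : hypBall z (1/20) ⊆ Box := by
    intro w hw
    obtain ⟨hw20, hd⟩ := hw
    rw [hiff w] at hd
    have hzw0 : 0 < z.2 * w.2 := mul_pos hz20 hw20
    have hsqrt0 : 0 < Real.sqrt (z.2 * w.2) := Real.sqrt_pos.2 hzw0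
    rw [div_lt_iff₀ (by linarith : (0:ℝ) < 2 * Real.sqrt (z.2 * w.2))] at hd
    have hDlt : dist z.1 w.1^2 + (z.2-w.2)^2 < 4 * s^2 * (z.2 * w.2) := by
      have h := (Real.sqrt_lt' (by nlinarith [hs0, hsqrt0] :
        (0:ℝ) < s * (2*Real.sqrt (z.2*w.2)))).1 hd
      have e : (s*(2*Real.sqrt (z.2*w.2)))^2 = 4*s^2*(z.2*w.2) := by
        rw [mul_pow, mul_pow, Real.sq_sqrt hzw0.le]; ring
      rw [e] at h
      exact h
    have hs4 : 4*s^2 ≤ 1 := by nlinarith [hs0, hs2]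
    have h6 : (z.2-w.2)^2 < z.2*w.2 := by
      nlinarith [hDlt, sq_nonneg (dist z.1 w.1), hzw0, hs4]
    have hw3 : w.2 ≤ 3 * z.2 := by nlinarith [h6, hw20, hz20, sq_nonneg z.2]
    have hDR : Real.sqrt (dist z.1 w.1^2 + (z.2-w.2)^2) < R := by
      rw [Real.sqrt_lt' hR0, hR_def]
      nlinarith [hDlt, hw3, hs0, hz20, mul_pos (mul_pos hs0 hs0) (mul_pos hz20 hz20),
        mul_pos hs0 hz20]
    rw [hBox_def, Set.mem_prod]
    constructor
    · intro i
      have h1 : (z.1 i - w.1 i)^2 ≤ dist z.1 w.1 ^2 := by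
        rw [hdistsq]
        exact Finset.single_le_sum (f := fun i => (z.1 i - w.1 i)^2)
          (fun i _ => sq_nonneg _) (Finset.mem_univ i)
      have h2 : |z.1 i - w.1 i| < R := by
        rw [← Real.sqrt_sq_eq_abs]
        calc Real.sqrt ((z.1 i - w.1 i)^2)
            ≤ Real.sqrt (dist z.1 w.1^2 + (z.2-w.2)^2) :=
              Real.sqrt_le_sqrt (by nlinarith [h1, sq_nonneg (z.2 - w.2)])
          _ < R := hDR
      have h3 := abs_lt.1 h2
      exact ⟨by linarith [h3.1], by linarith [h3.2]⟩
    · have h2 : |z.2 - w.2| < R := by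
        rw [← Real.sqrt_sq_eq_abs]
        calc Real.sqrt ((z.2 - w.2)^2)
            ≤ Real.sqrt (dist z.1 w.1^2 + (z.2-w.2)^2) :=
              Real.sqrt_le_sqrt (by nlinarith [sq_nonneg (dist z.1 w.1)])
          _ < R := hDR
      have h3 := abs_lt.1 h2
      exact ⟨by linarith [h3.1], by linarith [h3.2]⟩
  -- volumes
  have hvolS : volume S = ENNReal.ofReal r ^ (n+1) := by
    rw [hS_def, Measure.volume_eq_prod, Measure.prod_prod, volume_box, Real.volume_Icc]
    simp only [add_sub_cancel_left]
    rw [Finset.prod_const, Finset.card_univ, Fintype.card_fin, pow_succ]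
  have hvolBox : volume Box = ENNReal.ofReal (8*s*z.2) ^ (n+1) := by
    rw [hBox_def, Measure.volume_eq_prod, Measure.prod_prod, volume_box, Real.volume_Icc]
    have e : ∀ a : ℝ, a + R - (a - R) = 8*s*z.2 := by intro a; rw [hR_def]; ring
    simp only [e]
    rw [Finset.prod_const, Finset.card_univ, Fintype.card_fin, pow_succ]
  -- the key real-number inequality
  have hkey : δ' * (8*s*z.2)^(n+1) ≤ r^(n+1) := by
    have e1 : δ' * (8*s*z.2)^(n+1) = ((8*s*z.2) / (32*((n:ℝ)+1)))^(n+1) := by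
      rw [hδ'_def, ← mul_pow]
      congr 1
      field_simp
    rw [e1]
    apply pow_le_pow_left₀ (by positivity)
    rw [div_le_iff₀ (by positivity)]
    calc (8:ℝ)*s*z.2 = 8 * (s * z.2) := by ring
      _ ≤ 8 * (s * ℓ) := by nlinarith [hs0]
      _ = r * (32*((n:ℝ)+1)) := by rw [hr_def]; field_simp; ring
  -- conclusion
  calc ENNReal.ofReal δ' * volume (hypBall z (1/20))
      ≤ ENNReal.ofReal δ' * volume Box := mul_le_mul_right (measure_mono hB_Box) _
    _ = ENNReal.ofReal δ' * ENNReal.ofReal (8*s*z.2) ^ (n+1) := by rw [hvolBox]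
    _ = ENNReal.ofReal (δ' * (8*s*z.2)^(n+1)) := by
        rw [ENNReal.ofReal_mul hδ'0.le, ← ENNReal.ofReal_pow (by positivity)]
    _ ≤ ENNReal.ofReal (r^(n+1)) := ENNReal.ofReal_le_ofReal hkey
    _ = ENNReal.ofReal r ^ (n+1) := ENNReal.ofReal_pow hr0.le _
    _ = volume S := hvolS.symm
    _ ≤ volume (hypBall z (1/20) ∩ ⋃ q ∈ F, topHalf n q.1 q.2) := by
        apply measure_mono
        intro w hw
        exact ⟨hS_B hw, Set.mem_iUnion.2 ⟨(j,k), Set.mem_iUnion.2 ⟨hqF, hS_T hw⟩⟩⟩
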